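/- Under the discretized (Galerkin) piezoelectric setting: for every T > 0 there exists a constant C* > 0, depending only on n, k, M, K, A, C, α, β and T, such that for every continuously differentiable f : ℝ → ℝⁿ, every twice continuously differentiable g : ℝ → ℝᵏ, and every solution (u, φ) of the discretized piezoelectric system on [0, T] with u three times continuously differentiable and φ twice continuously differentiable, one has for all t ∈ [0, T]: ‖u''(t)‖² + ‖u'(t)‖² + ‖φ'(t)‖² ≤ C* · ( ‖u''(0)‖² + ‖u'(0)‖² + ‖g'(0)‖² + ∫₀ᵀ ( ‖f'(s)‖² + ‖g'(s)‖² + ‖g''(s)‖² ) ds ). -/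

import Mathlib

open MeasureTheory Matrix Set Filter


-- Young-type inequality for dotProduct
lemma dot_le_half (v w : Fin m → ℝ) (ε : ℝ) (hε : 0 < ε) :
    v ⬝ᵥ w ≤ (2*ε)⁻¹ * (v ⬝ᵥ v) + (ε/2) * (w ⬝ᵥ w) := by
  simp only [dotProduct, Finset.mul_sum]
  rw [← Finset.sum_add_distrib]
  refine Finset.sum_le_sum fun i _ => ?_
  have h : 0 ≤ (v i - ε * w i)^2 := sq_nonneg _
  have : 0 < ε := hε
  rw [div_mul_eq_mul_div]
  rw [inv_mul_eq_div]
  rw [div_add_div _ _ (by positivity : (2*ε) ≠ 0) (by norm_num : (2:ℝ) ≠ 0)]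
  rw [le_div_iff₀ (by positivity)]
  ring_nf
  nlinarith [sq_nonneg (v i - ε * w i)]

-- quadratic form upper bound
lemma quad_upper (S : Matrix (Fin m) (Fin m) ℝ) (x : Fin m → ℝ) :
    x ⬝ᵥ S *ᵥ x ≤ (∑ i, ∑ j, |S i j|) * (x ⬝ᵥ x) := by
  have hx : ∀ i : Fin m, (x i)^2 ≤ x ⬝ᵥ x := by
    intro i
    have := Finset.single_le_sum (f := fun j => x j * x j)
      (fun j _ => mul_self_nonneg _) (Finset.mem_univ i)
    simpa [dotProduct, sq] using this
  calc x ⬝ᵥ S *ᵥ x = ∑ i, ∑ j, x i * (S i j * x j) := by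
        simp [dotProduct, mulVec, Finset.mul_sum]
    _ ≤ ∑ i, ∑ j, |S i j| * (x ⬝ᵥ x) := by
        refine Finset.sum_le_sum fun i _ => Finset.sum_le_sum fun j _ => ?_
        have h1 : x i * (S i j * x j) ≤ |S i j| * (|x i| * |x j|) := by
          calc x i * (S i j * x j) ≤ |x i * (S i j * x j)| := le_abs_self _
            _ = |S i j| * (|x i| * |x j|) := by rw [abs_mul, abs_mul]; ring
        refine h1.trans ?_
        have h2 : |x i| * |x j| ≤ x ⬝ᵥ x := by
          nlinarith [hx i, hx j, abs_nonneg (x i), abs_nonneg (x j), sq_abs (x i), sq_abs (x j), sq_nonneg (|x i| - |x j|)]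
        exact mul_le_mul_of_nonneg_left h2 (abs_nonneg _)
    _ = (∑ i, ∑ j, |S i j|) * (x ⬝ᵥ x) := by rw [Finset.sum_mul]; simp [Finset.sum_mul]

lemma dot_self_nonneg' {m : ℕ} (x : Fin m → ℝ) : 0 ≤ x ⬝ᵥ x :=
  Finset.sum_nonneg fun i _ => mul_self_nonneg _

lemma dot_self_eq_zero' {m : ℕ} {x : Fin m → ℝ} (h : x ⬝ᵥ x = 0) : x = 0 := by
  funext i
  have h0 : ∀ j ∈ Finset.univ, (0:ℝ) ≤ x j * x j := fun j _ => mul_self_nonneg _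
  have := (Finset.sum_eq_zero_iff_of_nonneg h0).1 h i (Finset.mem_univ i)
  simpa using mul_self_eq_zero.1 this

lemma posdef_lower {m : ℕ} {S : Matrix (Fin m) (Fin m) ℝ} (hS : S.PosDef) :
    ∃ c > (0:ℝ), ∀ x : Fin m → ℝ, c * (x ⬝ᵥ x) ≤ x ⬝ᵥ S *ᵥ x := by
  rcases Nat.eq_zero_or_pos m with hm | hm
  · subst hm
    exact ⟨1, one_pos, fun x => by simp [dotProduct, mulVec]⟩
  · set Q : (Fin m → ℝ) → ℝ := fun x => x ⬝ᵥ S *ᵥ x with hQ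
    have hQcont : Continuous Q := by continuity
    have hQ0cont : Continuous (fun x : Fin m → ℝ => x ⬝ᵥ x) := by continuity
    set sph : Set (Fin m → ℝ) := {x | x ⬝ᵥ x = 1} with hsph
    have hclosed : IsClosed sph := isClosed_eq hQ0cont continuous_const
    have hbdd : Bornology.IsBounded sph := by
      rw [Metric.isBounded_iff_subset_closedBall 0]
      refine ⟨1, fun x hx => ?_⟩
      simp only [Metric.mem_closedBall, dist_zero_right]
      rw [pi_norm_le_iff_of_nonneg zero_le_one]
      intro i
      rw [Real.norm_eq_abs, abs_le]
      have h1 : x i * x i ≤ 1 := by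
        have := Finset.single_le_sum (f := fun j => x j * x j)
          (fun j _ => mul_self_nonneg _) (Finset.mem_univ i)
        calc x i * x i ≤ x ⬝ᵥ x := this
          _ = 1 := hx
      constructor <;> nlinarith
    have hcompact : IsCompact sph := Metric.isCompact_of_isClosed_isBounded hclosed hbdd
    have hne : sph.Nonempty := by
      refine ⟨Pi.single ⟨0, hm⟩ 1, ?_⟩
      simp [hsph, dotProduct, Pi.single_apply]
    obtain ⟨x₀, hx₀s, hx₀min⟩ := hcompact.exists_isMinOn hne hQcont.continuousOn
    have hx₀ne : x₀ ≠ 0 := by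
      intro h
      rw [h] at hx₀s
      simp [hsph] at hx₀s
    have hc : 0 < Q x₀ := by simpa [hQ] using hS.dotProduct_mulVec_pos hx₀ne
    refine ⟨Q x₀, hc, fun x => ?_⟩
    rcases eq_or_ne x 0 with rfl | hx
    · simp [hQ]
    · have hxx : 0 < x ⬝ᵥ x := by
        rcases (dot_self_nonneg' x).lt_or_eq with h | h
        · exact h
        · exact absurd (dot_self_eq_zero' h.symm) hx
      set r : ℝ := Real.sqrt (x ⬝ᵥ x) with hr
      have hrpos : 0 < r := Real.sqrt_pos.2 hxx
      have hr2 : r * r = x ⬝ᵥ x := Real.mul_self_sqrt hxx.le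
      have hy : (r⁻¹ • x) ∈ sph := by
        simp only [hsph, mem_setOf_eq, smul_dotProduct, dotProduct_smul, smul_eq_mul]
        field_simp
        nlinarith
      have hmin : Q x₀ ≤ Q (r⁻¹ • x) := hx₀min hy
      have hQy : Q (r⁻¹ • x) = (r⁻¹ * r⁻¹) * Q x := by
        simp only [hQ, smul_dotProduct, dotProduct_smul, mulVec_smul, smul_eq_mul]
        ring
      rw [hQy] at hmin
      have : Q x₀ * (x ⬝ᵥ x) ≤ Q x := by
        rw [← hr2]
        calc Q x₀ * (r * r) ≤ ((r⁻¹ * r⁻¹) * Q x) * (r * r) :=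
          mul_le_mul_of_nonneg_right hmin (by positivity)
          _ = Q x := by field_simp
      exact this

-- derivative of t ↦ S *ᵥ v t
lemma hasDerivAt_mulVec {m p : ℕ} (S : Matrix (Fin p) (Fin m) ℝ)
    {v : ℝ → Fin m → ℝ} {v' : Fin m → ℝ} {t : ℝ} (hv : HasDerivAt v v' t) :
    HasDerivAt (fun s => S *ᵥ v s) (S *ᵥ v') t := by
  rw [hasDerivAt_pi]
  intro i
  simp only [mulVec, dotProduct]
  exact HasDerivAt.fun_sum fun j _ =>
    ((hasDerivAt_pi.1 hv) j).const_mul (S i j)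

-- derivative of t ↦ v t ⬝ᵥ w t
lemma hasDerivAt_dot {m : ℕ}
    {v w : ℝ → Fin m → ℝ} {v' w' : Fin m → ℝ} {t : ℝ}
    (hv : HasDerivAt v v' t) (hw : HasDerivAt w w' t) :
    HasDerivAt (fun s => v s ⬝ᵥ w s) (v' ⬝ᵥ w t + v t ⬝ᵥ w') t := by
  simp only [dotProduct]
  rw [← Finset.sum_add_distrib]
  exact HasDerivAt.fun_sum fun j _ =>
    ((hasDerivAt_pi.1 hv) j).mul ((hasDerivAt_pi.1 hw) j)

lemma deriv_eq_on_Icc {E : Type*} [NormedAddCommGroup E] [NormedSpace ℝ E]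
    {F G : ℝ → E} {F' G' : E} {T t : ℝ} (hT : 0 < T) (ht : t ∈ Icc 0 T)
    (heq : ∀ s ∈ Icc (0:ℝ) T, F s = G s)
    (hF : HasDerivAt F F' t) (hG : HasDerivAt G G' t) : F' = G' := by
  have hu : UniqueDiffWithinAt ℝ (Icc (0:ℝ) T) t := (uniqueDiffOn_Icc hT) t ht
  have hFW : HasDerivWithinAt F F' (Icc 0 T) t := hF.hasDerivWithinAt
  have hGW : HasDerivWithinAt F G' (Icc 0 T) t :=
    (hG.hasDerivWithinAt).congr (fun s hs => heq s hs) (heq t ht)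
  rw [← hFW.derivWithin hu, ← hGW.derivWithin hu]

lemma gronwall_my {E h : ℝ → ℝ} {c T : ℝ} (hc : 0 ≤ c) (hT : 0 < T)
    (hEcont : ContinuousOn E (Icc 0 T)) (hhcont : Continuous h) (hh : ∀ s, 0 ≤ h s)
    (hE0 : 0 ≤ E 0)
    (hE' : ∀ t ∈ Ioo (0:ℝ) T, ∃ E', HasDerivAt E E' t ∧ E' ≤ c * E t + h t) :
    ∀ t ∈ Icc (0:ℝ) T, E t ≤ Real.exp (c*T) * (E 0 + ∫ s in (0:ℝ)..T, h s) := by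
  set G : ℝ → ℝ := fun t => Real.exp (-c*t) * E t - ∫ s in (0:ℝ)..t, Real.exp (-c*s) * h s
    with hG
  have hkcont : Continuous (fun s => Real.exp (-c*s) * h s) := by continuity
  have hIcont : Continuous (fun t => ∫ s in (0:ℝ)..t, Real.exp (-c*s) * h s) := by
    have : ∀ b : ℝ, HasDerivAt (fun t => ∫ s in (0:ℝ)..t, Real.exp (-c*s) * h s)
        (Real.exp (-c*b) * h b) b := fun b => (hkcont.integral_hasStrictDerivAt 0 b).hasDerivAt
    exact continuous_iff_continuousAt.2 fun x => (this x).continuousAt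
  have hGcont : ContinuousOn G (Icc 0 T) :=
    ((Real.continuous_exp.comp (continuous_const.mul continuous_id)).continuousOn.mul hEcont).sub
      hIcont.continuousOn
  have hGanti : AntitoneOn G (Icc 0 T) := by
    apply antitoneOn_of_deriv_nonpos (convex_Icc 0 T) hGcont
    · rw [interior_Icc]
      intro t ht
      obtain ⟨E', hE'd, _⟩ := hE' t ht
      exact (((((Real.hasDerivAt_exp (-c*t)).comp t ((hasDerivAt_id t).const_mul (-c))).mul hE'd).sub
        ((hkcont.integral_hasStrictDerivAt 0 t).hasDerivAt)).differentiableAt).differentiableWithinAt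
    · rw [interior_Icc]
      intro t ht
      obtain ⟨E', hE'd, hE'le⟩ := hE' t ht
      have hd : HasDerivAt G ((-c * Real.exp (-c*t)) * E t + Real.exp (-c*t) * E'
          - Real.exp (-c*t) * h t) t := by
        have h1 : HasDerivAt (fun t => Real.exp (-c*t)) (Real.exp (-c*t) * (-c)) t :=
          (Real.hasDerivAt_exp (-c*t)).comp t ((hasDerivAt_id t).const_mul (-c)) |>.congr_deriv (by ring)
        have h2 := h1.mul hE'd
        have h3 := (hkcont.integral_hasStrictDerivAt 0 t).hasDerivAt
        have := h2.sub h3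
        exact this.congr_deriv (by ring)
      rw [hd.deriv]
      have hexp : 0 < Real.exp (-c*t) := Real.exp_pos _
      nlinarith [hE'le]
  -- conclude
  intro t ht
  have h0 : (0:ℝ) ∈ Icc (0:ℝ) T := ⟨le_refl _, hT.le⟩
  have := hGanti h0 ht ht.1
  simp only [hG, mul_zero, intervalIntegral.integral_same, sub_zero, Real.exp_zero, one_mul,
    neg_mul, neg_zero] at this
  -- this : exp(-(c*t)) * E t - ∫₀ᵗ exp(-(c*s)) h s ≤ E 0
  have hint1 : (∫ s in (0:ℝ)..t, Real.exp (-(c*s)) * h s) ≤ ∫ s in (0:ℝ)..t, h s := by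
    apply intervalIntegral.integral_mono_on ht.1
      ((hkcont.intervalIntegrable 0 t).congr ?_) (hhcont.intervalIntegrable 0 t)
    · intro s hs
      have : Real.exp (-(c*s)) ≤ 1 := by
        rw [Real.exp_le_one_iff]
        have := hs.1
        nlinarith
      nlinarith [hh s, (Real.exp_pos (-(c*s))).le]
    · intro s _; simp only [neg_mul]
  have hint2 : (∫ s in (0:ℝ)..t, h s) ≤ ∫ s in (0:ℝ)..T, h s := by
    apply intervalIntegral.integral_mono_interval (le_refl (0:ℝ)) ht.1 ht.2
      (Filter.Eventually.of_forall fun s => hh s) (hhcont.intervalIntegrable 0 T)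
  have key : Real.exp (-(c*t)) * E t ≤ E 0 + ∫ s in (0:ℝ)..T, h s := by
    nlinarith
  have hrhs : 0 ≤ E 0 + ∫ s in (0:ℝ)..T, h s := by
    have : 0 ≤ ∫ s in (0:ℝ)..T, h s :=
      intervalIntegral.integral_nonneg hT.le fun s _ => hh s
    linarith
  have : E t ≤ Real.exp (c*t) * (E 0 + ∫ s in (0:ℝ)..T, h s) := by
    have he : Real.exp (-(c*t)) * Real.exp (c*t) = 1 := by
      rw [← Real.exp_add]; simp
    nlinarith [Real.exp_pos (c*t), Real.exp_pos (-(c*t))]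
  refine this.trans ?_
  have : Real.exp (c*t) ≤ Real.exp (c*T) := by
    apply Real.exp_le_exp.2
    nlinarith [ht.2, ht.1]
  nlinarith

-- symmetric dot swap
lemma dot_sym {m : ℕ} {S : Matrix (Fin m) (Fin m) ℝ} (hS : Sᵀ = S) (x y : Fin m → ℝ) :
    x ⬝ᵥ S *ᵥ y = y ⬝ᵥ S *ᵥ x := by
  rw [dotProduct_mulVec, ← vecMul_transpose, hS, dotProduct_comm]

lemma possemidef_symm {m : ℕ} {S : Matrix (Fin m) (Fin m) ℝ} (hS : S.PosSemidef) : Sᵀ = S := by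
  have := hS.1.eq
  rwa [conjTranspose_eq_transpose_of_trivial] at this

-- transpose dot
lemma dot_transpose {n k : ℕ} (C : Matrix (Fin n) (Fin k) ℝ) (x : Fin n → ℝ) (y : Fin k → ℝ) :
    x ⬝ᵥ C *ᵥ y = y ⬝ᵥ Cᵀ *ᵥ x := by
  rw [dotProduct_mulVec, ← vecMul_transpose, transpose_transpose, dotProduct_comm]

lemma dot_CtC {n k : ℕ} (C : Matrix (Fin n) (Fin k) ℝ) (x : Fin n → ℝ) :
    (Cᵀ *ᵥ x) ⬝ᵥ (Cᵀ *ᵥ x) = x ⬝ᵥ (C * Cᵀ) *ᵥ x := by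
  rw [← mulVec_mulVec, dot_transpose, transpose_transpose]

lemma two_dot_le {m : ℕ} (v w : Fin m → ℝ) : 2 * (v ⬝ᵥ w) ≤ v ⬝ᵥ v + w ⬝ᵥ w := by
  simp only [dotProduct, Finset.mul_sum]
  rw [← Finset.sum_add_distrib]
  exact Finset.sum_le_sum fun i _ => by nlinarith [sq_nonneg (v i - w i)]

lemma two_dot_ge {m : ℕ} (v w : Fin m → ℝ) : -(v ⬝ᵥ v + w ⬝ᵥ w) ≤ 2 * (v ⬝ᵥ w) := by
  have := two_dot_le v (-w)
  simp only [dotProduct_neg, neg_dotProduct, neg_neg] at this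
  linarith

lemma dot_sub_sq {m : ℕ} (v w : Fin m → ℝ) :
    (v - w) ⬝ᵥ (v - w) ≤ 2 * (v ⬝ᵥ v) + 2 * (w ⬝ᵥ w) := by
  have h := two_dot_ge v w
  simp only [sub_dotProduct, dotProduct_sub]
  have hc := dotProduct_comm v w
  linarith

lemma cont_dot {m : ℕ} {v w : ℝ → Fin m → ℝ} {s : Set ℝ}
    (hv : ContinuousOn v s) (hw : ContinuousOn w s) :
    ContinuousOn (fun t => v t ⬝ᵥ w t) s := by
  simp only [dotProduct]
  exact continuousOn_finset_sum _ fun i _ =>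
    (((continuous_apply i).comp_continuousOn hv).mul ((continuous_apply i).comp_continuousOn hw))

lemma cont_mulVec {m p : ℕ} (S : Matrix (Fin p) (Fin m) ℝ) {v : ℝ → Fin m → ℝ} {s : Set ℝ}
    (hv : ContinuousOn v s) : ContinuousOn (fun t => S *ᵥ v t) s := by
  apply continuousOn_pi.2
  intro i
  simp only [mulVec, dotProduct]
  exact continuousOn_finset_sum _ fun j _ =>
    (continuousOn_const.mul ((continuous_apply j).comp_continuousOn hv))


/-- The pair `(u, φ)` (with first and second derivatives `u'`, `u''` of `u`) solves the
discretized (Galerkin) piezoelectric system with mass matrix `M`, stiffness matrix `K`,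
dielectric matrix `A`, piezoelectric coupling matrix `C`, Rayleigh damping parameters
`α, β` and forcing terms `f, g` on the time set `I`. -/
def PiezoSolves {n k : ℕ} (M K : Matrix (Fin n) (Fin n) ℝ)
    (A : Matrix (Fin k) (Fin k) ℝ) (C : Matrix (Fin n) (Fin k) ℝ)
    (α β : ℝ) (f : ℝ → Fin n → ℝ) (g : ℝ → Fin k → ℝ)
    (u u' u'' : ℝ → Fin n → ℝ) (φ : ℝ → Fin k → ℝ) (I : Set ℝ) : Prop :=
  (∀ t ∈ I, HasDerivAt u (u' t) t) ∧
  (∀ t ∈ I, HasDerivAt u' (u'' t) t) ∧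
  (∀ t ∈ I,
    M.mulVec (u'' t) + α • M.mulVec (u' t) + K.mulVec (u t)
      + β • K.mulVec (u' t) + C.mulVec (φ t) = f t) ∧
  (∀ t ∈ I, Cᵀ.mulVec (u t) - A.mulVec (φ t) = g t)

set_option maxHeartbeats 8000000

/-- Higher-regularity energy estimate (the Galerkin core of Theorem 2): a constant `C*`
depending only on the data `M, K, A, C, α, β, T` bounds
`‖u''(t)‖² + ‖u'(t)‖² + ‖φ'(t)‖²` by the differentiated initial data and forcing. -/
theorem piezo_discrete_higher_regularity_estimate {n k : ℕ}
    (M K : Matrix (Fin n) (Fin n) ℝ) (A : Matrix (Fin k) (Fin k) ℝ)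
    (C : Matrix (Fin n) (Fin k) ℝ) (α β : ℝ)
    (hM : M.PosDef) (hK : K.PosSemidef) (hA : A.PosDef)
    (hα : 0 ≤ α) (hβ : 0 ≤ β)
    (T : ℝ) (hT : 0 < T) :
    ∃ Cstar > (0 : ℝ),
      ∀ (f f' : ℝ → Fin n → ℝ) (g g' g'' : ℝ → Fin k → ℝ)
        (u u' u'' u''' : ℝ → Fin n → ℝ) (φ φ' φ'' : ℝ → Fin k → ℝ),
        (∀ t, HasDerivAt f (f' t) t) → Continuous f' →
        (∀ t, HasDerivAt g (g' t) t) → (∀ t, HasDerivAt g' (g'' t) t) →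
        Continuous g'' →
        PiezoSolves M K A C α β f g u u' u'' φ (Icc 0 T) →
        (∀ t ∈ Icc (0 : ℝ) T, HasDerivAt u'' (u''' t) t) →
        ContinuousOn u''' (Icc 0 T) →
        (∀ t ∈ Icc (0 : ℝ) T, HasDerivAt φ (φ' t) t) →
        (∀ t ∈ Icc (0 : ℝ) T, HasDerivAt φ' (φ'' t) t) →
        ContinuousOn φ'' (Icc 0 T) →
        ∀ t ∈ Icc (0 : ℝ) T,
          u'' t ⬝ᵥ u'' t + u' t ⬝ᵥ u' t + φ' t ⬝ᵥ φ' t ≤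
            Cstar * (u'' 0 ⬝ᵥ u'' 0 + u' 0 ⬝ᵥ u' 0 + g' 0 ⬝ᵥ g' 0
              + ∫ s in (0 : ℝ)..T, (f' s ⬝ᵥ f' s + g' s ⬝ᵥ g' s + g'' s ⬝ᵥ g'' s)) := by

  obtain ⟨lM, hlM, hMlow⟩ := posdef_lower hM
  obtain ⟨lA, hlA, hAlow⟩ := posdef_lower hA
  have hMsym : Mᵀ = M := possemidef_symm hM.posSemidef
  have hKsym : Kᵀ = K := possemidef_symm hK
  have hAsym : Aᵀ = A := possemidef_symm hA.posSemidef
  set CM : ℝ := ∑ i, ∑ j, |M i j| with hCM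
  set CK : ℝ := ∑ i, ∑ j, |K i j| with hCKdef
  set CA : ℝ := ∑ i, ∑ j, |A i j| with hCAdef
  set CCt : ℝ := ∑ i, ∑ j, |(C * Cᵀ) i j| with hCCt
  have hCMnn : 0 ≤ CM := Finset.sum_nonneg fun i _ => Finset.sum_nonneg fun j _ => abs_nonneg _
  have hCKnn : 0 ≤ CK := Finset.sum_nonneg fun i _ => Finset.sum_nonneg fun j _ => abs_nonneg _
  have hCAnn : 0 ≤ CA := Finset.sum_nonneg fun i _ => Finset.sum_nonneg fun j _ => abs_nonneg _
  have hCCtnn : 0 ≤ CCt := Finset.sum_nonneg fun i _ => Finset.sum_nonneg fun j _ => abs_nonneg _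
  set c : ℝ := 2/lM + 1/lA + 1 with hc
  have hcpos : 0 < c := by
    rw [hc]
    have h1 := div_pos (by norm_num : (0:ℝ)<2) hlM
    have h2 := div_pos one_pos hlA
    linarith
  set c₁ : ℝ := 1/lM + 1/lA + 1 with hc₁
  have hc₁pos : 0 < c₁ := by
    rw [hc₁]
    have h1 := div_pos one_pos hlM
    have h2 := div_pos one_pos hlA
    linarith
  set c₂ : ℝ := CM + CK + 1 + CA*(2*CCt+2)/(lA^2) with hc₂
  have hc₂pos : 0 < c₂ := by
    rw [hc₂]
    have hD : 0 ≤ CA*(2*CCt+2)/(lA^2) :=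
      div_nonneg (mul_nonneg hCAnn (by linarith)) (le_of_lt (pow_pos hlA 2))
    linarith
  clear_value CM CK CA CCt c c₁ c₂
  refine ⟨c₁ * Real.exp (c*T) * (c₂+1),
    mul_pos (mul_pos hc₁pos (Real.exp_pos _)) (by linarith), ?_⟩
  intro f f' g g' g'' u u' u'' u''' φ φ' φ'' hf hf'c hg hg'd hg''c hsol hu''' hu'''c hφ'I hφ''I hφ''c
  obtain ⟨hu, hu', heq1, heq2⟩ := hsol
  have hu'c : ContinuousOn u' (Icc 0 T) := fun t ht => ((hu' t ht).continuousAt).continuousWithinAt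
  have hu''c : ContinuousOn u'' (Icc 0 T) :=
    fun t ht => ((hu''' t ht).continuousAt).continuousWithinAt
  have hφ'c : ContinuousOn φ' (Icc 0 T) :=
    fun t ht => ((hφ''I t ht).continuousAt).continuousWithinAt
  have hg'c : Continuous g' := continuous_iff_continuousAt.2 fun t => (hg'd t).continuousAt
  set E : ℝ → ℝ := fun s => u'' s ⬝ᵥ M *ᵥ u'' s + u' s ⬝ᵥ K *ᵥ u' s + φ' s ⬝ᵥ A *ᵥ φ' s
    + u' s ⬝ᵥ u' s with hE
  have hEcont : ContinuousOn E (Icc 0 T) := by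
    rw [hE]
    exact (((cont_dot hu''c (cont_mulVec M hu''c)).add
      (cont_dot hu'c (cont_mulVec K hu'c))).add
      (cont_dot hφ'c (cont_mulVec A hφ'c))).add (cont_dot hu'c hu'c)
  set h : ℝ → ℝ := fun s => f' s ⬝ᵥ f' s + g'' s ⬝ᵥ g'' s with hhdef
  have hhcont : Continuous h := by
    rw [hhdef]
    rw [← continuousOn_univ]
    exact (cont_dot hf'c.continuousOn hf'c.continuousOn).add
      (cont_dot hg''c.continuousOn hg''c.continuousOn)
  have hhnn : ∀ s, 0 ≤ h s := by
    intro s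
    have : h s = f' s ⬝ᵥ f' s + g'' s ⬝ᵥ g'' s := by rw [hhdef]
    rw [this]
    exact add_nonneg (dot_self_nonneg' _) (dot_self_nonneg' _)
  have hMq : ∀ x, 0 ≤ x ⬝ᵥ M *ᵥ x := fun x =>
    (hMlow x).trans' (mul_nonneg hlM.le (dot_self_nonneg' x))
  have hAq : ∀ x, 0 ≤ x ⬝ᵥ A *ᵥ x := fun x =>
    (hAlow x).trans' (mul_nonneg hlA.le (dot_self_nonneg' x))
  have hKq : ∀ x : Fin n → ℝ, 0 ≤ x ⬝ᵥ K *ᵥ x := fun x => by simpa using hK.dotProduct_mulVec_nonneg x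
  have d1 : ∀ t ∈ Icc (0:ℝ) T, Cᵀ *ᵥ u' t - A *ᵥ φ' t = g' t := by
    intro t ht
    have hF : HasDerivAt (fun s => Cᵀ *ᵥ u s - A *ᵥ φ s) (Cᵀ *ᵥ u' t - A *ᵥ φ' t) t :=
      (hasDerivAt_mulVec _ (hu t ht)).sub (hasDerivAt_mulVec _ (hφ'I t ht))
    exact deriv_eq_on_Icc hT ht heq2 hF (hg t)
  have d2 : ∀ t ∈ Ioo (0:ℝ) T, Cᵀ *ᵥ u'' t - A *ᵥ φ'' t = g'' t := by
    intro t ht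
    have htI : t ∈ Icc (0:ℝ) T := Ioo_subset_Icc_self ht
    have hF : HasDerivAt (fun s => Cᵀ *ᵥ u' s - A *ᵥ φ' s) (Cᵀ *ᵥ u'' t - A *ᵥ φ'' t) t :=
      (hasDerivAt_mulVec _ (hu' t htI)).sub (hasDerivAt_mulVec _ (hφ''I t htI))
    exact deriv_eq_on_Icc hT htI d1 hF (hg'd t)
  have d3 : ∀ t ∈ Ioo (0:ℝ) T,
      M *ᵥ u''' t + α • (M *ᵥ u'' t) + K *ᵥ u' t + β • (K *ᵥ u'' t) + C *ᵥ φ' t = f' t := by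
    intro t ht
    have htI : t ∈ Icc (0:ℝ) T := Ioo_subset_Icc_self ht
    have hF : HasDerivAt
        (fun s => M *ᵥ u'' s + α • (M *ᵥ u' s) + K *ᵥ u s + β • (K *ᵥ u' s) + C *ᵥ φ s)
        (M *ᵥ u''' t + α • (M *ᵥ u'' t) + K *ᵥ u' t + β • (K *ᵥ u'' t) + C *ᵥ φ' t) t :=
      ((((hasDerivAt_mulVec _ (hu''' t htI)).add
        ((hasDerivAt_mulVec _ (hu' t htI)).const_smul α)).add
        (hasDerivAt_mulVec _ (hu t htI))).add
        ((hasDerivAt_mulVec _ (hu' t htI)).const_smul β)).add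
        (hasDerivAt_mulVec _ (hφ'I t htI))
    exact deriv_eq_on_Icc hT htI heq1 hF (hf t)
  have hE' : ∀ t ∈ Ioo (0:ℝ) T, ∃ E', HasDerivAt E E' t ∧ E' ≤ c * E t + h t := by
    intro t ht
    have htI : t ∈ Icc (0:ℝ) T := Ioo_subset_Icc_self ht
    refine ⟨(u''' t ⬝ᵥ M *ᵥ u'' t + u'' t ⬝ᵥ M *ᵥ u''' t)
      + (u'' t ⬝ᵥ K *ᵥ u' t + u' t ⬝ᵥ K *ᵥ u'' t)
      + (φ'' t ⬝ᵥ A *ᵥ φ' t + φ' t ⬝ᵥ A *ᵥ φ'' t)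
      + (u'' t ⬝ᵥ u' t + u' t ⬝ᵥ u'' t), ?_, ?_⟩
    · rw [hE]
      exact (((hasDerivAt_dot (hu''' t htI) (hasDerivAt_mulVec M (hu''' t htI))).add
        (hasDerivAt_dot (hu' t htI) (hasDerivAt_mulVec K (hu' t htI)))).add
        (hasDerivAt_dot (hφ''I t htI) (hasDerivAt_mulVec A (hφ''I t htI)))).add
        (hasDerivAt_dot (hu' t htI) (hu' t htI))
    · have h3' := d3 t ht
      have h2' := d2 t ht
      have hEt : E t = u'' t ⬝ᵥ M *ᵥ u'' t + u' t ⬝ᵥ K *ᵥ u' t + φ' t ⬝ᵥ A *ᵥ φ' t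
          + u' t ⬝ᵥ u' t := by rw [hE]
      have hht : h t = f' t ⬝ᵥ f' t + g'' t ⬝ᵥ g'' t := by rw [hhdef]
      set a := u'' t with ha; set b := u' t with hb; set p := φ' t with hp
      set q := φ'' t with hq; set w := u''' t with hw
      set F1 := f' t with hF1; set G2 := g'' t with hG2
      have e3 : M *ᵥ w = F1 - α • (M *ᵥ a) - K *ᵥ b - β • (K *ᵥ a) - C *ᵥ p := by
        rw [← h3']; abel
      have e2 : Cᵀ *ᵥ a = A *ᵥ q + G2 := by
        rw [← h2']; abel
      have edot : a ⬝ᵥ M *ᵥ w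
          = a ⬝ᵥ F1 - α * (a ⬝ᵥ M *ᵥ a) - a ⬝ᵥ K *ᵥ b - β * (a ⬝ᵥ K *ᵥ a)
            - (p ⬝ᵥ A *ᵥ q + p ⬝ᵥ G2) := by
        rw [e3]
        simp only [dotProduct_sub, dotProduct_smul, smul_eq_mul]
        have : a ⬝ᵥ C *ᵥ p = p ⬝ᵥ A *ᵥ q + p ⬝ᵥ G2 := by
          rw [dot_transpose, e2, dotProduct_add]
        rw [this]
      have sym1 : w ⬝ᵥ M *ᵥ a = a ⬝ᵥ M *ᵥ w := dot_sym hMsym w a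
      have sym2 : b ⬝ᵥ K *ᵥ a = a ⬝ᵥ K *ᵥ b := dot_sym hKsym b a
      have sym3 : q ⬝ᵥ A *ᵥ p = p ⬝ᵥ A *ᵥ q := dot_sym hAsym q p
      have sym4 : b ⬝ᵥ a = a ⬝ᵥ b := dotProduct_comm b a
      have hb1 := two_dot_le a F1
      have hb2 := two_dot_ge p G2
      have hb3 := two_dot_le a b
      have hb4 : 0 ≤ α * (a ⬝ᵥ M *ᵥ a) := mul_nonneg hα (hMq a)
      have hb5 : 0 ≤ β * (a ⬝ᵥ K *ᵥ a) := mul_nonneg hβ (hKq a)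
      have k1 : 2 * (a ⬝ᵥ a) ≤ (2/lM) * (a ⬝ᵥ M *ᵥ a) := by
        rw [div_mul_eq_mul_div, le_div_iff₀ hlM]
        nlinarith [hMlow a]
      have k2 : p ⬝ᵥ p ≤ (1/lA) * (p ⬝ᵥ A *ᵥ p) := by
        rw [div_mul_eq_mul_div, le_div_iff₀ hlA]
        nlinarith [hAlow p]
      have k3 : (2/lM) * (a ⬝ᵥ M *ᵥ a) ≤ (2/lM) * E t := by
        apply mul_le_mul_of_nonneg_left _ (div_pos (by norm_num : (0:ℝ)<2) hlM).le
        rw [hEt]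
        have := dot_self_nonneg' b
        linarith [hKq b, hAq p]
      have k4 : (1/lA) * (p ⬝ᵥ A *ᵥ p) ≤ (1/lA) * E t := by
        apply mul_le_mul_of_nonneg_left _ (div_pos one_pos hlA).le
        rw [hEt]
        have := dot_self_nonneg' b
        linarith [hKq b, hMq a]
      have k5 : b ⬝ᵥ b ≤ E t := by
        rw [hEt]
        linarith [hKq b, hMq a, hAq p]
      have hcE : c * E t = (2/lM) * E t + (1/lA) * E t + E t := by rw [hc]; ring
      rw [hht]
      clear_value a b p q w F1 G2 E h
      linarith [hb1, hb2, hb3, hb4, hb5, k1, k2, k3, k4, k5]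
  have hE0 : 0 ≤ E 0 := by
    have hE0eq : E 0 = u'' 0 ⬝ᵥ M *ᵥ u'' 0 + u' 0 ⬝ᵥ K *ᵥ u' 0 + φ' 0 ⬝ᵥ A *ᵥ φ' 0
        + u' 0 ⬝ᵥ u' 0 := by rw [hE]
    rw [hE0eq]
    have := dot_self_nonneg' (u' 0)
    linarith [hMq (u'' 0), hKq (u' 0), hAq (φ' 0)]
  have hEbound := gronwall_my hcpos.le hT hEcont hhcont hhnn hE0 hE'
  set S0 : ℝ := u'' 0 ⬝ᵥ u'' 0 + u' 0 ⬝ᵥ u' 0 + g' 0 ⬝ᵥ g' 0 with hS0def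
  have hS0nn : 0 ≤ S0 := by
    rw [hS0def]
    have h1 := dot_self_nonneg' (u'' 0); have h2 := dot_self_nonneg' (u' 0)
    have h3 := dot_self_nonneg' (g' 0); linarith
  have hE0b : E 0 ≤ c₂ * S0 := by
    have h0I : (0:ℝ) ∈ Icc (0:ℝ) T := ⟨le_refl _, hT.le⟩
    have e0 : A *ᵥ φ' 0 = Cᵀ *ᵥ u' 0 - g' 0 := by
      have := d1 0 h0I
      rw [← this]; abel
    have hEt0 : E 0 = u'' 0 ⬝ᵥ M *ᵥ u'' 0 + u' 0 ⬝ᵥ K *ᵥ u' 0 + φ' 0 ⬝ᵥ A *ᵥ φ' 0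
        + u' 0 ⬝ᵥ u' 0 := by rw [hE]
    have hS0eq : S0 = u'' 0 ⬝ᵥ u'' 0 + u' 0 ⬝ᵥ u' 0 + g' 0 ⬝ᵥ g' 0 := hS0def
    set a0 := u'' 0 with ha0; set b0 := u' 0 with hb0; set p0 := φ' 0 with hp0v
    set g0 := g' 0 with hg0
    set w0 : Fin k → ℝ := Cᵀ *ᵥ b0 - g0 with hw0
    have e0' : A *ᵥ p0 = w0 := by rw [hw0]; exact e0
    have haa := dot_self_nonneg' a0; have hbb := dot_self_nonneg' b0
    have hgg := dot_self_nonneg' g0; have hpp := dot_self_nonneg' p0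
    have hww := dot_self_nonneg' w0
    have h1 : lA * (p0 ⬝ᵥ p0) ≤ p0 ⬝ᵥ A *ᵥ p0 := hAlow p0
    have h2 : p0 ⬝ᵥ A *ᵥ p0 = p0 ⬝ᵥ w0 := by rw [e0']
    have h3 := dot_le_half p0 w0 (1/lA) (div_pos one_pos hlA)
    have harith : (2*(1/lA))⁻¹ = lA/2 := by field_simp
    rw [harith] at h3
    have h4 : lA/2 * (p0 ⬝ᵥ p0) ≤ ((1/lA)/2) * (w0 ⬝ᵥ w0) := by linarith
    have hp0b : lA^2 * (p0 ⬝ᵥ p0) ≤ w0 ⬝ᵥ w0 := by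
      have h5 := mul_le_mul_of_nonneg_left h4 (by linarith : (0:ℝ) ≤ 2*lA)
      calc lA^2 * (p0 ⬝ᵥ p0) = (2*lA) * (lA/2 * (p0 ⬝ᵥ p0)) := by ring
        _ ≤ (2*lA) * (((1/lA)/2) * (w0 ⬝ᵥ w0)) := h5
        _ = w0 ⬝ᵥ w0 := by field_simp
    have hw0b : w0 ⬝ᵥ w0 ≤ 2*CCt*(b0 ⬝ᵥ b0) + 2*(g0 ⬝ᵥ g0) := by
      have hh1 := dot_sub_sq (Cᵀ *ᵥ b0) g0
      have hh2 : (Cᵀ *ᵥ b0) ⬝ᵥ (Cᵀ *ᵥ b0) ≤ CCt * (b0 ⬝ᵥ b0) := by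
        rw [hCCt, dot_CtC]; exact quad_upper _ _
      rw [hw0]; linarith
    have hq1 : a0 ⬝ᵥ M *ᵥ a0 ≤ CM * (a0 ⬝ᵥ a0) := by rw [hCM]; exact quad_upper M a0
    have hq2 : b0 ⬝ᵥ K *ᵥ b0 ≤ CK * (b0 ⬝ᵥ b0) := by rw [hCKdef]; exact quad_upper K b0
    have hq3 : p0 ⬝ᵥ A *ᵥ p0 ≤ CA * (p0 ⬝ᵥ p0) := by rw [hCAdef]; exact quad_upper A p0
    have hp0c : p0 ⬝ᵥ p0 ≤ (2*CCt*(b0 ⬝ᵥ b0) + 2*(g0 ⬝ᵥ g0)) / lA^2 := by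
      rw [le_div_iff₀ (pow_pos hlA 2)]
      nlinarith [hp0b, hw0b]
    have hAp0 : p0 ⬝ᵥ A *ᵥ p0 ≤ CA * ((2*CCt*(b0 ⬝ᵥ b0) + 2*(g0 ⬝ᵥ g0)) / lA^2) :=
      hq3.trans (mul_le_mul_of_nonneg_left hp0c hCAnn)
    have expand : CA * ((2*CCt*(b0 ⬝ᵥ b0) + 2*(g0 ⬝ᵥ g0)) / lA^2)
        = (CA*(2*CCt)/(lA^2)) * (b0 ⬝ᵥ b0) + (CA*2/(lA^2)) * (g0 ⬝ᵥ g0) := by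
      field_simp
    rw [expand] at hAp0
    set D : ℝ := CA*(2*CCt+2)/(lA^2) with hD
    have hDnn : 0 ≤ D := by
      rw [hD]
      exact div_nonneg (mul_nonneg hCAnn (by linarith)) (le_of_lt (pow_pos hlA 2))
    have hcoef1 : CA*(2*CCt)/(lA^2) ≤ D := by
      rw [hD]
      apply (div_le_div_iff_of_pos_right (pow_pos hlA 2)).2
      nlinarith [hCAnn]
    have hcoef2 : CA*2/(lA^2) ≤ D := by
      rw [hD]
      apply (div_le_div_iff_of_pos_right (pow_pos hlA 2)).2
      nlinarith [hCAnn, hCCtnn]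
    have hc₂' : c₂ = CM + CK + 1 + D := by rw [hc₂, hD]
    have m1 : a0 ⬝ᵥ M *ᵥ a0 ≤ c₂ * (a0 ⬝ᵥ a0) :=
      hq1.trans (mul_le_mul_of_nonneg_right (by linarith) haa)
    have m2 : (CA*(2*CCt)/(lA^2)) * (b0 ⬝ᵥ b0) ≤ D * (b0 ⬝ᵥ b0) :=
      mul_le_mul_of_nonneg_right hcoef1 hbb
    have m3 : (CA*2/(lA^2)) * (g0 ⬝ᵥ g0) ≤ D * (g0 ⬝ᵥ g0) :=
      mul_le_mul_of_nonneg_right hcoef2 hgg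
    have m5 : (CK + 1 + D) * (b0 ⬝ᵥ b0) ≤ c₂ * (b0 ⬝ᵥ b0) :=
      mul_le_mul_of_nonneg_right (by linarith) hbb
    have m6 : D * (g0 ⬝ᵥ g0) ≤ c₂ * (g0 ⬝ᵥ g0) :=
      mul_le_mul_of_nonneg_right (by linarith) hgg
    rw [hEt0, hS0eq]
    clear_value a0 b0 p0 g0 w0 D E S0
    linarith only [hAp0, m1, m2, m3, hq2, m5, m6,
      dot_self_nonneg' b0]
  set H : ℝ → ℝ := fun s => f' s ⬝ᵥ f' s + g' s ⬝ᵥ g' s + g'' s ⬝ᵥ g'' s with hHdef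
  have hHcont : Continuous H := by
    rw [hHdef, ← continuousOn_univ]
    exact ((cont_dot hf'c.continuousOn hf'c.continuousOn).add
      (cont_dot hg'c.continuousOn hg'c.continuousOn)).add
      (cont_dot hg''c.continuousOn hg''c.continuousOn)
  have hintmono : (∫ s in (0:ℝ)..T, h s) ≤ ∫ s in (0:ℝ)..T, H s := by
    apply intervalIntegral.integral_mono_on hT.le (hhcont.intervalIntegrable 0 T)
      (hHcont.intervalIntegrable 0 T)
    intro s _
    have e1 : h s = f' s ⬝ᵥ f' s + g'' s ⬝ᵥ g'' s := by rw [hhdef]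
    have e2 : H s = f' s ⬝ᵥ f' s + g' s ⬝ᵥ g' s + g'' s ⬝ᵥ g'' s := by rw [hHdef]
    rw [e1, e2]
    have := dot_self_nonneg' (g' s)
    linarith
  have hintHnn : 0 ≤ ∫ s in (0:ℝ)..T, H s := by
    apply intervalIntegral.integral_nonneg hT.le
    intro s _
    have e2 : H s = f' s ⬝ᵥ f' s + g' s ⬝ᵥ g' s + g'' s ⬝ᵥ g'' s := by rw [hHdef]
    rw [e2]
    have h1 := dot_self_nonneg' (f' s); have h2 := dot_self_nonneg' (g' s)
    have h3 := dot_self_nonneg' (g'' s)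
    linarith
  have hinthnn : 0 ≤ ∫ s in (0:ℝ)..T, h s :=
    intervalIntegral.integral_nonneg hT.le fun s _ => hhnn s
  intro t ht
  have hEt := hEbound t ht
  have lhs_le : u'' t ⬝ᵥ u'' t + u' t ⬝ᵥ u' t + φ' t ⬝ᵥ φ' t ≤ c₁ * E t := by
    have hEtval : E t = u'' t ⬝ᵥ M *ᵥ u'' t + u' t ⬝ᵥ K *ᵥ u' t + φ' t ⬝ᵥ A *ᵥ φ' t
        + u' t ⬝ᵥ u' t := by rw [hE]
    have k1 : u'' t ⬝ᵥ u'' t ≤ (1/lM) * (u'' t ⬝ᵥ M *ᵥ u'' t) := by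
      rw [div_mul_eq_mul_div, le_div_iff₀ hlM]
      nlinarith [hMlow (u'' t)]
    have k2 : φ' t ⬝ᵥ φ' t ≤ (1/lA) * (φ' t ⬝ᵥ A *ᵥ φ' t) := by
      rw [div_mul_eq_mul_div, le_div_iff₀ hlA]
      nlinarith [hAlow (φ' t)]
    have k3 : (1/lM) * (u'' t ⬝ᵥ M *ᵥ u'' t) ≤ (1/lM) * E t := by
      apply mul_le_mul_of_nonneg_left _ (div_pos one_pos hlM).le
      rw [hEtval]
      have := dot_self_nonneg' (u' t)
      linarith [hKq (u' t), hAq (φ' t)]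
    have k4 : (1/lA) * (φ' t ⬝ᵥ A *ᵥ φ' t) ≤ (1/lA) * E t := by
      apply mul_le_mul_of_nonneg_left _ (div_pos one_pos hlA).le
      rw [hEtval]
      have := dot_self_nonneg' (u' t)
      linarith [hKq (u' t), hMq (u'' t)]
    have k5 : u' t ⬝ᵥ u' t ≤ E t := by
      rw [hEtval]
      linarith [hKq (u' t), hMq (u'' t), hAq (φ' t)]
    have hc₁E : c₁ * E t = (1/lM) * E t + (1/lA) * E t + E t := by rw [hc₁]; ring
    clear_value E
    linarith
  have hEfinal : E t ≤ Real.exp (c*T) * ((c₂+1) * (S0 + ∫ s in (0:ℝ)..T, H s)) := by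
    refine hEt.trans ?_
    apply mul_le_mul_of_nonneg_left _ (Real.exp_pos _).le
    have harr : ∀ e0 ih s0 iH : ℝ, e0 ≤ c₂ * s0 → ih ≤ iH → 0 ≤ s0 → 0 ≤ iH →
        e0 + ih ≤ (c₂+1) * (s0 + iH) := by
      intro e0 ih s0 iH h1 h2 h3 h4
      nlinarith [mul_nonneg hc₂pos.le h4]
    exact harr _ _ _ _ hE0b hintmono hS0nn hintHnn
  calc u'' t ⬝ᵥ u'' t + u' t ⬝ᵥ u' t + φ' t ⬝ᵥ φ' t ≤ c₁ * E t := lhs_le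
    _ ≤ c₁ * (Real.exp (c*T) * ((c₂+1) * (S0 + ∫ s in (0:ℝ)..T, H s))) :=
        mul_le_mul_of_nonneg_left hEfinal hc₁pos.le
    _ = c₁ * Real.exp (c*T) * (c₂+1) * (S0 + ∫ s in (0:ℝ)..T, H s) := by ring
    _ = c₁ * Real.exp (c*T) * (c₂+1) * (u'' 0 ⬝ᵥ u'' 0 + u' 0 ⬝ᵥ u' 0 + g' 0 ⬝ᵥ g' 0
        + ∫ s in (0:ℝ)..T, (f' s ⬝ᵥ f' s + g' s ⬝ᵥ g' s + g'' s ⬝ᵥ g'' s)) := by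
        rw [hS0def, hHdef]
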